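/- Let a be a real number with −15 ≤ a < −3 and let A(z) = a/(1−z²)² for z in the open unit disc 𝔻. Then every non-trivial solution of f'' + A f = 0 has at most two zeros in 𝔻, and there exists a non-trivial solution having exactly two distinct zeros in 𝔻. -/

import Mathlib

open Complex Metric Filter Topology


namespace Stmt14Aux

lemma re_pos_of_ball {z : ℂ} (hz : z ∈ ball (0:ℂ) 1) :
    0 < (1 - z).re ∧ 0 < (1 + z).re := by
  rw [mem_ball_zero_iff] at hz
  have h : |z.re| ≤ ‖z‖ := Complex.abs_re_le_norm z
  have h2 := abs_le.mp (h.trans hz.le)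
  constructor <;> simp <;> nlinarith [hz, h.trans_lt hz, abs_le.mp h]

lemma slit_of_ball {z : ℂ} (hz : z ∈ ball (0:ℂ) 1) :
    (1 - z) ∈ Complex.slitPlane ∧ (1 + z) ∈ Complex.slitPlane := by
  have h := re_pos_of_ball hz
  exact ⟨Complex.mem_slitPlane_iff.mpr (Or.inl h.1), Complex.mem_slitPlane_iff.mpr (Or.inl h.2)⟩

lemma ne_zero_of_ball {z : ℂ} (hz : z ∈ ball (0:ℂ) 1) : (1 - z) ≠ 0 ∧ (1 + z) ≠ 0 :=
  ⟨Complex.slitPlane_ne_zero (slit_of_ball hz).1, Complex.slitPlane_ne_zero (slit_of_ball hz).2⟩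

lemma hasDerivAt_F (c d : ℂ) {z : ℂ} (hz : z ∈ ball (0:ℂ) 1) :
    HasDerivAt (fun w => (1 - w) ^ c * (1 + w) ^ d)
      (-c * ((1-z)^(c-1) * (1+z)^d) + d * ((1-z)^c * (1+z)^(d-1))) z := by
  have h1 : HasDerivAt (fun w : ℂ => 1 - w) (-1) z := by
    simpa using (hasDerivAt_id z).const_sub 1
  have h2 : HasDerivAt (fun w : ℂ => 1 + w) 1 z := by
    simpa using (hasDerivAt_id z).const_add 1
  have hc := h1.cpow_const (c := c) (slit_of_ball hz).1
  have hd := h2.cpow_const (c := d) (slit_of_ball hz).2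
  refine (hc.mul hd).congr_deriv ?_
  ring

lemma cpow_ne_zero' {x : ℂ} (hx : x ≠ 0) (y : ℂ) : x ^ y ≠ 0 := by
  rw [Complex.cpow_def_of_ne_zero hx]; exact Complex.exp_ne_zero _

lemma solution_F {a : ℝ} {c d : ℂ} (hc : c*(c-1) = -(a:ℂ)/4) (hd : d*(d-1) = -(a:ℂ)/4)
    (hcd : c*d = (a:ℂ)/4) {z : ℂ} (hz : z ∈ ball (0:ℂ) 1) :
    deriv (deriv (fun w => (1-w)^c*(1+w)^d)) z
      + ((a:ℂ)/(1-z^2)^2) * ((1-z)^c*(1+z)^d) = 0 := by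
  have hd1 : deriv (deriv (fun w => (1-w)^c*(1+w)^d)) z
      = deriv (fun w => -c * ((1-w)^(c-1) * (1+w)^d) + d * ((1-w)^c * (1+w)^(d-1))) z := by
    apply Filter.EventuallyEq.deriv_eq
    filter_upwards [isOpen_ball.mem_nhds hz] with w hw
    exact (hasDerivAt_F c d hw).deriv
  have h2 : HasDerivAt (fun w => -c * ((1-w)^(c-1) * (1+w)^d) + d * ((1-w)^c * (1+w)^(d-1)))
      (-c * (-(c-1) * ((1-z)^(c-1-1) * (1+z)^d) + d * ((1-z)^(c-1) * (1+z)^(d-1)))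
        + d * (-c * ((1-z)^(c-1) * (1+z)^(d-1)) + (d-1) * ((1-z)^c * (1+z)^(d-1-1)))) z :=
    ((hasDerivAt_F (c-1) d hz).const_mul (-c)).add ((hasDerivAt_F c (d-1) hz).const_mul d)
  rw [hd1, h2.deriv]
  obtain ⟨hu, hv⟩ := ne_zero_of_ball hz
  set u := 1 - z with hu'
  set v := 1 + z with hv'
  have e1 : u ^ (c-1) = u^c / u := by rw [Complex.cpow_sub _ _ hu, Complex.cpow_one]
  have e2 : v ^ (d-1) = v^d / v := by rw [Complex.cpow_sub _ _ hv, Complex.cpow_one]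
  have e3 : u ^ (c-1-1) = u^c / u^2 := by
    rw [Complex.cpow_sub _ _ hu, Complex.cpow_sub _ _ hu, Complex.cpow_one]
    rw [div_div, ← sq]
  have e4 : v ^ (d-1-1) = v^d / v^2 := by
    rw [Complex.cpow_sub _ _ hv, Complex.cpow_sub _ _ hv, Complex.cpow_one]
    rw [div_div, ← sq]
  have huv : 1 - z^2 = u * v := by rw [hu', hv']; ring
  have h2' : u + v = 2 := by rw [hu', hv']; ring
  rw [e1, e2, e3, e4, huv]
  have hX := cpow_ne_zero' hu c
  have hY := cpow_ne_zero' hv d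
  set X := u^c with hXd; set Y := v^d with hYd
  clear_value X Y
  clear_value u v
  clear hu' hv' e1 e2 e3 e4 hd1 h2 hXd hYd
  field_simp
  linear_combination (X*Y) * (v^2 * hc + u^2 * hd - (2*u*v)*hcd)
    - (X*Y*((a:ℂ)/4)*(u+v+2)) * h2'

lemma const_of_deriv_zero {W : ℂ → ℂ} (h : ∀ z ∈ ball (0:ℂ) 1, HasDerivAt W 0 z)
    {z : ℂ} (hz : z ∈ ball (0:ℂ) 1) : W z = W 0 := by
  have h0 : (0:ℂ) ∈ ball (0:ℂ) 1 := by simp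
  have hdiff : DifferentiableOn ℂ W (ball (0:ℂ) 1) :=
    fun x hx => ((h x hx).differentiableAt).differentiableWithinAt
  refine (convex_ball (0:ℂ) 1).is_const_of_fderivWithin_eq_zero hdiff (fun x hx => ?_) hz h0
  have := (h x hx).hasFDerivAt.hasFDerivWithinAt.fderivWithin (isOpen_ball.uniqueDiffWithinAt hx)
  rw [this]
  ext; simp

lemma wronskian_const {A f g : ℂ → ℂ}
    (hf : AnalyticOnNhd ℂ f (ball (0:ℂ) 1)) (hg : AnalyticOnNhd ℂ g (ball (0:ℂ) 1))
    (hf2 : ∀ z ∈ ball (0:ℂ) 1, deriv (deriv f) z + A z * f z = 0)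
    (hg2 : ∀ z ∈ ball (0:ℂ) 1, deriv (deriv g) z + A z * g z = 0)
    {z : ℂ} (hz : z ∈ ball (0:ℂ) 1) :
    f z * deriv g z - deriv f z * g z = f 0 * deriv g 0 - deriv f 0 * g 0 := by
  apply const_of_deriv_zero (W := fun z => f z * deriv g z - deriv f z * g z) _ hz
  intro x hx
  have hfd : HasDerivAt f (deriv f x) x := (hf x hx).differentiableAt.hasDerivAt
  have hgd : HasDerivAt g (deriv g x) x := (hg x hx).differentiableAt.hasDerivAt
  have hfd2 : HasDerivAt (deriv f) (deriv (deriv f) x) x :=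
    ((hf.deriv) x hx).differentiableAt.hasDerivAt
  have hgd2 : HasDerivAt (deriv g) (deriv (deriv g) x) x :=
    ((hg.deriv) x hx).differentiableAt.hasDerivAt
  have := (hfd.mul hgd2).sub (hfd2.mul hgd)
  refine this.congr_deriv ?_
  have e1 : deriv (deriv f) x = -(A x * f x) := by linear_combination hf2 x hx
  have e2 : deriv (deriv g) x = -(A x * g x) := by linear_combination hg2 x hx
  rw [e1, e2]; ring

noncomputable def ψ (z : ℂ) : ℂ := Complex.log (1 - z) - Complex.log (1 + z)

lemma exp_psi {z : ℂ} (hz : z ∈ ball (0:ℂ) 1) : Complex.exp (ψ z) = (1 - z) / (1 + z) := by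
  obtain ⟨hu, hv⟩ := ne_zero_of_ball hz
  rw [ψ, Complex.exp_sub, Complex.exp_log hu, Complex.exp_log hv]

lemma re_quot_pos {z : ℂ} (hz : z ∈ ball (0:ℂ) 1) : 0 < ((1 - z) / (1 + z)).re := by
  rw [Complex.div_re]
  obtain ⟨hu, hv⟩ := ne_zero_of_ball hz
  have hn : 0 < Complex.normSq (1 + z) := Complex.normSq_pos.mpr hv
  have habs : ‖z‖ < 1 := by rwa [mem_ball_zero_iff] at hz
  have h2 : z.re^2 + z.im^2 < 1 := by
    have := Complex.sq_norm z
    rw [Complex.normSq_apply] at this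
    nlinarith [norm_nonneg z, habs]
  have key : (1-z).re * (1+z).re + (1-z).im * (1+z).im = 1 - (z.re^2 + z.im^2) := by
    simp [Complex.add_re, Complex.add_im, Complex.sub_re, Complex.sub_im]; ring
  rw [← add_div, key]
  exact div_pos (by nlinarith) hn

lemma im_psi_lt {z : ℂ} (hz : z ∈ ball (0:ℂ) 1) : |(ψ z).im| < Real.pi / 2 := by
  have h1 : |Complex.arg (1 - z)| < Real.pi / 2 :=
    Complex.abs_arg_lt_pi_div_two_iff.mpr (Or.inl (re_pos_of_ball hz).1)
  have h2 : |Complex.arg (1 + z)| < Real.pi / 2 :=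
    Complex.abs_arg_lt_pi_div_two_iff.mpr (Or.inl (re_pos_of_ball hz).2)
  have him : (ψ z).im = Complex.arg (1 - z) - Complex.arg (1 + z) := by
    simp [ψ, Complex.log_im]
  have hlt : |(ψ z).im| < Real.pi := by
    rw [him]; rw [abs_lt] at h1 h2 ⊢
    constructor <;> nlinarith [Real.pi_pos]
  have hcos : 0 < Real.cos (ψ z).im := by
    have hre : 0 < (Complex.exp (ψ z)).re := by rw [exp_psi hz]; exact re_quot_pos hz
    rw [Complex.exp_re] at hre
    nlinarith [Real.exp_pos (ψ z).re]
  by_contra hcon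
  push_neg at hcon
  have : Real.cos |(ψ z).im| ≤ 0 :=
    Real.cos_nonpos_of_pi_div_two_le_of_le hcon (hlt.le.trans (by linarith [Real.pi_pos]))
  rw [Real.cos_abs] at this
  linarith

lemma z_of_quot {z E : ℂ} (hv : 1 + z ≠ 0) (h : (1 - z) / (1 + z) = E) :
    z = (1 - E) / (1 + E) := by
  rw [div_eq_iff hv] at h
  have hE : 1 + E ≠ 0 := by
    intro h0
    have : E = -1 := by linear_combination h0
    rw [this] at h
    have : (2:ℂ) = 0 := by linear_combination h
    norm_num at this
  rw [eq_div_iff hE]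
  linear_combination -h

lemma quot_inj {z w : ℂ} (hz : 1 + z ≠ 0) (hw : 1 + w ≠ 0)
    (h : (1 - z)/(1 + z) = (1 - w)/(1 + w)) : z = w := by
  rw [div_eq_div_iff hz hw] at h
  linear_combination -h/2

noncomputable def pp (s : ℝ) : ℂ := (1 + (s:ℂ))/2
noncomputable def qq (s : ℝ) : ℂ := (1 - (s:ℂ))/2
noncomputable def ff1 (s : ℝ) (z : ℂ) : ℂ := (1-z)^(pp s) * (1+z)^(qq s)
noncomputable def ff2 (s : ℝ) (z : ℂ) : ℂ := (1-z)^(qq s) * (1+z)^(pp s)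

lemma ff1_eq (s : ℝ) {z : ℂ} (hz : z ∈ ball (0:ℂ) 1) :
    ff1 s z = ff2 s z * Complex.exp ((s:ℂ) * ψ z) := by
  obtain ⟨hu, hv⟩ := ne_zero_of_ball hz
  rw [ff1, ff2, Complex.cpow_def_of_ne_zero hu, Complex.cpow_def_of_ne_zero hv,
    Complex.cpow_def_of_ne_zero hu, Complex.cpow_def_of_ne_zero hv,
    ← Complex.exp_add, ← Complex.exp_add, ← Complex.exp_add]
  congr 1
  rw [ψ, pp, qq]
  ring

lemma ff2_ne (s : ℝ) {z : ℂ} (hz : z ∈ ball (0:ℂ) 1) : ff2 s z ≠ 0 := by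
  obtain ⟨hu, hv⟩ := ne_zero_of_ball hz
  exact mul_ne_zero (cpow_ne_zero' hu _) (cpow_ne_zero' hv _)

lemma ff1_ne (s : ℝ) {z : ℂ} (hz : z ∈ ball (0:ℂ) 1) : ff1 s z ≠ 0 := by
  obtain ⟨hu, hv⟩ := ne_zero_of_ball hz
  exact mul_ne_zero (cpow_ne_zero' hu _) (cpow_ne_zero' hv _)

lemma ball0 : (0:ℂ) ∈ ball (0:ℂ) 1 := by simp

lemma ff1_zero (s : ℝ) : ff1 s 0 = 1 := by
  rw [ff1]; norm_num

lemma ff2_zero (s : ℝ) : ff2 s 0 = 1 := by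
  rw [ff2]; norm_num

lemma ff1_deriv0 (s : ℝ) : deriv (ff1 s) 0 = -(s:ℂ) := by
  have h := (hasDerivAt_F (pp s) (qq s) ball0).deriv
  rw [show ff1 s = fun z => (1-z)^(pp s) * (1+z)^(qq s) from rfl, h]
  norm_num [pp, qq]
  ring

lemma ff2_deriv0 (s : ℝ) : deriv (ff2 s) 0 = (s:ℂ) := by
  have h := (hasDerivAt_F (qq s) (pp s) ball0).deriv
  rw [show ff2 s = fun z => (1-z)^(qq s) * (1+z)^(pp s) from rfl, h]
  norm_num [pp, qq]
  ring

lemma psi_eq_of_exp {s : ℝ} (hs1 : 2 < s) (hs2 : s ≤ 4) {lam : ℂ} (hlam : lam ≠ 0)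
    {z : ℂ} (hz : z ∈ ball (0:ℂ) 1) (h : Complex.exp ((s:ℂ) * ψ z) = lam) :
    ∃ n : ℤ, |Complex.arg lam + 2*Real.pi*n| < 2*Real.pi ∧
      ψ z = (Complex.log lam + n*(2*Real.pi*Complex.I))/(s:ℂ) := by
  have hs0 : (s:ℂ) ≠ 0 := by
    simp only [ne_eq, Complex.ofReal_eq_zero]; linarith
  have h1 : Complex.exp ((s:ℂ) * ψ z - Complex.log lam) = 1 := by
    rw [Complex.exp_sub, Complex.exp_log hlam, h, div_self hlam]
  obtain ⟨n, hn⟩ := Complex.exp_eq_one_iff.mp h1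
  refine ⟨n, ?_, ?_⟩
  · have him : ((s:ℂ) * ψ z).im = s * (ψ z).im := by
      simp [Complex.mul_im]
    have him2 : ((s:ℂ) * ψ z).im = Complex.arg lam + 2*Real.pi*n := by
      have := congrArg Complex.im hn
      simp [Complex.sub_im, Complex.log_im, Complex.mul_im] at this
      rw [Complex.mul_im] at him ⊢
      linarith [this]
    have hb : |s * (ψ z).im| < 2 * Real.pi := by
      rw [abs_mul]
      have h3 := im_psi_lt hz
      have hsabs : |s| = s := abs_of_pos (by linarith)
      rw [hsabs]
      have : s * |(ψ z).im| < s * (Real.pi/2) := by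
        apply mul_lt_mul_of_pos_left h3 (by linarith)
      nlinarith [Real.pi_pos, abs_nonneg ((ψ z).im)]
    rwa [← him, him2] at hb
  · rw [eq_div_iff hs0]
    linear_combination hn

lemma int_cases {x : ℝ} {n : ℤ} (hx1 : -Real.pi < x) (hx2 : x ≤ Real.pi)
    (h : |x + 2*Real.pi*n| < 2*Real.pi) : n = -1 ∨ n = 0 ∨ n = 1 := by
  have hpi := Real.pi_pos
  rw [abs_lt] at h
  have h1 : (n:ℝ) < 3/2 := by nlinarith
  have h2 : (-3/2 : ℝ) < n := by nlinarith
  have h1' : n < 2 := by exact_mod_cast h1.trans (by norm_num : (3/2:ℝ) < 2)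
  have h2' : -2 < n := by exact_mod_cast lt_of_le_of_lt (by norm_num : (-2:ℝ) ≤ -3/2) h2
  omega

lemma zeros_subset {s : ℝ} (hs1 : 2 < s) (hs2 : s ≤ 4) {α β : ℂ} (hα : α ≠ 0) (hβ : β ≠ 0) :
    ∃ z₁ z₂ : ℂ, ∀ z ∈ ball (0:ℂ) 1, α * ff1 s z + β * ff2 s z = 0 → z = z₁ ∨ z = z₂ := by
  set lam : ℂ := -β/α with hlamd
  have hlam : lam ≠ 0 := by
    rw [hlamd]
    exact div_ne_zero (neg_ne_zero.mpr hβ) hα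
  set C : ℤ → ℂ := fun n =>
    (1 - Complex.exp ((Complex.log lam + n*(2*Real.pi*Complex.I))/(s:ℂ))) /
    (1 + Complex.exp ((Complex.log lam + n*(2*Real.pi*Complex.I))/(s:ℂ))) with hC
  have main : ∀ z ∈ ball (0:ℂ) 1, α * ff1 s z + β * ff2 s z = 0 →
      ∃ n : ℤ, (n = -1 ∨ n = 0 ∨ n = 1) ∧
        (|Complex.arg lam + 2*Real.pi*n| < 2*Real.pi) ∧ z = C n := by
    intro z hz hzero
    have hexp : Complex.exp ((s:ℂ) * ψ z) = lam := by
      rw [ff1_eq s hz] at hzero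
      have h2 := ff2_ne s hz
      have h3 : (Complex.exp ((s:ℂ)*ψ z) * α) * ff2 s z = (-β) * ff2 s z := by
        linear_combination hzero
      have h4 := mul_right_cancel₀ h2 h3
      rw [hlamd, eq_div_iff hα]
      linear_combination h4
    obtain ⟨n, hn1, hn2⟩ := psi_eq_of_exp hs1 hs2 hlam hz hexp
    have hcases := int_cases (Complex.neg_pi_lt_arg lam) (Complex.arg_le_pi lam) hn1
    refine ⟨n, hcases, hn1, ?_⟩
    have hq : (1 - z)/(1 + z)
        = Complex.exp ((Complex.log lam + n*(2*Real.pi*Complex.I))/(s:ℂ)) := by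
      rw [← hn2, exp_psi hz]
    exact z_of_quot (ne_zero_of_ball hz).2 hq
  by_cases harg : 0 < Complex.arg lam
  · refine ⟨C 0, C (-1), fun z hz h0 => ?_⟩
    obtain ⟨n, hn3, hn1, hzC⟩ := main z hz h0
    have hpi := Real.pi_pos
    rcases hn3 with h | h | h
    · right; rw [hzC, h]
    · left; rw [hzC, h]
    · exfalso
      rw [h] at hn1
      push_cast at hn1
      rw [abs_lt] at hn1
      linarith
  · push_neg at harg
    refine ⟨C 0, C 1, fun z hz h0 => ?_⟩
    obtain ⟨n, hn3, hn1, hzC⟩ := main z hz h0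
    have hpi := Real.pi_pos
    rcases hn3 with h | h | h
    · exfalso
      rw [h] at hn1
      push_cast at hn1
      rw [abs_lt] at hn1
      linarith
    · left; rw [hzC, h]
    · right; rw [hzC, h]

lemma log_one_add_tan_I {φ : ℝ} (h1 : -(Real.pi/2) < φ) (h2 : φ < Real.pi/2) :
    Complex.log (1 + (Real.tan φ : ℂ)*Complex.I)
      = (-Real.log (Real.cos φ) : ℝ) + (φ:ℝ)*Complex.I := by
  have hcos : 0 < Real.cos φ := Real.cos_pos_of_mem_Ioo ⟨h1, h2⟩
  have hexp : Complex.exp ((-Real.log (Real.cos φ) : ℝ) + (φ:ℝ)*Complex.I)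
      = 1 + (Real.tan φ : ℂ)*Complex.I := by
    rw [Complex.exp_add, Complex.exp_mul_I]
    rw [← Complex.ofReal_exp, Real.exp_neg, Real.exp_log hcos]
    rw [show Complex.cos (φ:ℂ) = (Real.cos φ : ℂ) from (Complex.ofReal_cos φ).symm,
      show Complex.sin (φ:ℂ) = (Real.sin φ : ℂ) from (Complex.ofReal_sin φ).symm]
    have ht : (Real.tan φ : ℂ) = (Real.sin φ : ℂ) / (Real.cos φ : ℂ) := by
      rw [Real.tan_eq_sin_div_cos]; push_cast; ring
    rw [ht]
    have hcos' : (Real.cos φ : ℂ) ≠ 0 := by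
      simp only [ne_eq, Complex.ofReal_eq_zero]; linarith
    have hccos : Complex.cos (φ:ℂ) ≠ 0 := by
      simp only [← Complex.ofReal_cos, ne_eq, Complex.ofReal_eq_zero]
      exact hcos.ne'
    field_simp [hccos]
    rw [Complex.ofReal_div, Complex.ofReal_one, one_div, inv_mul_cancel₀ hcos', one_mul]
  rw [← hexp, Complex.log_exp] <;>
    simp [Complex.add_im, Complex.mul_im] <;> linarith [Real.pi_pos]

lemma psi_tan {φ : ℝ} (h1 : -(Real.pi/2) < φ) (h2 : φ < Real.pi/2) :
    ψ (-(Real.tan φ : ℂ)*Complex.I) = 2*(φ:ℝ)*Complex.I := by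
  have e1 : (1 : ℂ) - (-(Real.tan φ : ℂ)*Complex.I) = 1 + (Real.tan φ : ℂ)*Complex.I := by ring
  have e2 : (1 : ℂ) + (-(Real.tan φ : ℂ)*Complex.I) = 1 + (Real.tan (-φ) : ℂ)*Complex.I := by
    rw [Real.tan_neg]; push_cast; ring
  rw [ψ, e1, e2, log_one_add_tan_I h1 h2, log_one_add_tan_I (by linarith) (by linarith)]
  rw [Real.cos_neg]
  push_cast
  ring

end Stmt14Aux

open Stmt14Aux in
/-- Let `−15 ≤ a < −3` be real and `A(z) = a/(1−z²)²` on `𝔻`. Then every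
non-trivial analytic solution of `f'' + A f = 0` has at most two zeros in `𝔻`, and some
non-trivial analytic solution has exactly two distinct zeros in `𝔻`. -/
theorem stmt_14 (a : ℝ) (ha₁ : -15 ≤ a) (ha₂ : a < -3)
    (A : ℂ → ℂ) (hA : ∀ z ∈ ball (0:ℂ) 1, A z = (a : ℂ) / (1 - z ^ 2) ^ 2) :
    (∀ f : ℂ → ℂ, AnalyticOnNhd ℂ f (ball (0:ℂ) 1) →
      (∀ z ∈ ball (0:ℂ) 1, deriv (deriv f) z + A z * f z = 0) →
      ¬ (∀ z ∈ ball (0:ℂ) 1, f z = 0) →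
      ∀ S : Finset ℂ, (∀ z ∈ S, z ∈ ball (0:ℂ) 1 ∧ f z = 0) → S.card ≤ 2) ∧
    (∃ f : ℂ → ℂ, AnalyticOnNhd ℂ f (ball (0:ℂ) 1) ∧
      (∀ z ∈ ball (0:ℂ) 1, deriv (deriv f) z + A z * f z = 0) ∧
      ¬ (∀ z ∈ ball (0:ℂ) 1, f z = 0) ∧
      ∃ z₁ ∈ ball (0:ℂ) 1, ∃ z₂ ∈ ball (0:ℂ) 1, z₁ ≠ z₂ ∧ f z₁ = 0 ∧ f z₂ = 0 ∧
        ∀ z ∈ ball (0:ℂ) 1, f z = 0 → z = z₁ ∨ z = z₂) := by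
  have ha0 : (0:ℝ) ≤ 1 - a := by linarith
  set s : ℝ := Real.sqrt (1-a) with hsdef
  have hsq : s^2 = 1-a := Real.sq_sqrt ha0
  have hs0 : 0 ≤ s := Real.sqrt_nonneg _
  have hs1 : 2 < s := by nlinarith
  have hs2 : s ≤ 4 := by nlinarith
  have hσ : ((s:ℂ))^2 = 1 - (a:ℂ) := by
    have := congrArg (fun x : ℝ => (x:ℂ)) hsq
    push_cast at this
    exact this
  have hp : pp s * (pp s - 1) = -(a:ℂ)/4 := by rw [pp]; linear_combination hσ/4
  have hq : qq s * (qq s - 1) = -(a:ℂ)/4 := by rw [qq]; linear_combination hσ/4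
  have hpq : pp s * qq s = (a:ℂ)/4 := by rw [pp, qq]; linear_combination -hσ/4
  have hpq' : qq s * pp s = (a:ℂ)/4 := by rw [mul_comm]; exact hpq
  have hf1sol : ∀ z ∈ ball (0:ℂ) 1, deriv (deriv (ff1 s)) z + A z * ff1 s z = 0 := by
    intro z hz
    rw [hA z hz]
    exact solution_F hp hq hpq hz
  have hf2sol : ∀ z ∈ ball (0:ℂ) 1, deriv (deriv (ff2 s)) z + A z * ff2 s z = 0 := by
    intro z hz
    rw [hA z hz]
    exact solution_F hq hp hpq' hz
  have hf1an : AnalyticOnNhd ℂ (ff1 s) (ball (0:ℂ) 1) :=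
    DifferentiableOn.analyticOnNhd
      (fun z hz => ((hasDerivAt_F _ _ hz).differentiableAt).differentiableWithinAt) isOpen_ball
  have hf2an : AnalyticOnNhd ℂ (ff2 s) (ball (0:ℂ) 1) :=
    DifferentiableOn.analyticOnNhd
      (fun z hz => ((hasDerivAt_F _ _ hz).differentiableAt).differentiableWithinAt) isOpen_ball
  have hW12 : ∀ z ∈ ball (0:ℂ) 1,
      ff1 s z * deriv (ff2 s) z - deriv (ff1 s) z * ff2 s z = 2*(s:ℂ) := by
    intro z hz
    rw [wronskian_const hf1an hf2an hf1sol hf2sol hz, ff1_zero, ff2_zero, ff1_deriv0, ff2_deriv0]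
    ring
  have h2s : (2*(s:ℂ)) ≠ 0 := by
    simp only [ne_eq, mul_eq_zero, Complex.ofReal_eq_zero]
    push_neg
    constructor <;> norm_num <;> linarith
  constructor
  · -- Part 1
    intro f hfan hfode hfnt S hS
    set w1 := f 0 * deriv (ff1 s) 0 - deriv f 0 * ff1 s 0 with hw1d
    set w2 := f 0 * deriv (ff2 s) 0 - deriv f 0 * ff2 s 0 with hw2d
    have hW1 : ∀ z ∈ ball (0:ℂ) 1, f z * deriv (ff1 s) z - deriv f z * ff1 s z = w1 :=
      fun z hz => wronskian_const hfan hf1an hfode hf1sol hz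
    have hW2 : ∀ z ∈ ball (0:ℂ) 1, f z * deriv (ff2 s) z - deriv f z * ff2 s z = w2 :=
      fun z hz => wronskian_const hfan hf2an hfode hf2sol hz
    set α := w2 / (2*(s:ℂ)) with hαd
    set β := -w1 / (2*(s:ℂ)) with hβd
    have hrep : ∀ z ∈ ball (0:ℂ) 1, f z = α * ff1 s z + β * ff2 s z := by
      intro z hz
      rw [hαd, hβd]
      field_simp [show (s:ℂ) ≠ 0 from fun h => h2s (by rw [h, mul_zero])]
      linear_combination (-(ff2 s z)) * hW1 z hz + (ff1 s z) * hW2 z hz - (f z) * hW12 z hz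
    have hcand : ∃ z₁ z₂ : ℂ, ∀ z ∈ ball (0:ℂ) 1, f z = 0 → z = z₁ ∨ z = z₂ := by
      by_cases hα0 : α = 0
      · by_cases hβ0 : β = 0
        · exfalso
          apply hfnt
          intro z hz
          rw [hrep z hz, hα0, hβ0]
          ring
        · refine ⟨0, 0, fun z hz h0 => ?_⟩
          exfalso
          have h1 := hrep z hz
          rw [hα0, h0] at h1
          have h2 := ff2_ne s hz
          apply hβ0
          have : β * ff2 s z = 0 := by linear_combination -h1
          exact (mul_eq_zero.mp this).resolve_right h2
      · by_cases hβ0 : β = 0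
        · refine ⟨0, 0, fun z hz h0 => ?_⟩
          exfalso
          have h1 := hrep z hz
          rw [hβ0, h0] at h1
          have h2 := ff1_ne s hz
          apply hα0
          have : α * ff1 s z = 0 := by linear_combination -h1
          exact (mul_eq_zero.mp this).resolve_right h2
        · obtain ⟨z₁, z₂, hz12⟩ := zeros_subset hs1 hs2 hα0 hβ0
          refine ⟨z₁, z₂, fun z hz h0 => hz12 z hz ?_⟩
          rw [← hrep z hz]
          exact h0
    obtain ⟨z₁, z₂, hcover⟩ := hcand
    have hsub : S ⊆ ({z₁, z₂} : Finset ℂ) := by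
      intro z hzS
      obtain ⟨hzB, hz0⟩ := hS z hzS
      rcases hcover z hzB hz0 with h | h <;> simp [h]
    calc S.card ≤ ({z₁, z₂} : Finset ℂ).card := Finset.card_le_card hsub
      _ ≤ 2 := (Finset.card_insert_le _ _).trans (by simp)
  · -- Part 2
    have hpi := Real.pi_pos
    set φ := Real.pi/(2*s) with hφd
    have hφ1 : 0 < φ := by
      rw [hφd]; positivity
    have hφ2 : φ < Real.pi/4 := by
      rw [hφd]
      rw [div_lt_div_iff₀ (by linarith) (by norm_num)]
      nlinarith
    have hφ3 : φ < Real.pi/2 := by linarith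
    set t := Real.tan φ with htd
    have ht0 : 0 < t := Real.tan_pos_of_pos_of_lt_pi_div_two hφ1 hφ3
    have ht1 : t < 1 := by
      have := Real.tan_lt_tan_of_nonneg_of_lt_pi_div_two hφ1.le (by linarith) hφ2
      rwa [Real.tan_pi_div_four] at this
    set z₁ : ℂ := -(t:ℂ)*Complex.I with hz1d
    set z₂ : ℂ := (t:ℂ)*Complex.I with hz2d
    have hz1B : z₁ ∈ ball (0:ℂ) 1 := by
      rw [mem_ball_zero_iff, hz1d]
      simp only [norm_neg, norm_mul, Complex.norm_real, Complex.norm_I, mul_one,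
        Real.norm_eq_abs]
      rwa [abs_of_pos ht0]
    have hz2B : z₂ ∈ ball (0:ℂ) 1 := by
      rw [mem_ball_zero_iff, hz2d]
      simp only [norm_mul, Complex.norm_real, Complex.norm_I, mul_one, Real.norm_eq_abs]
      rwa [abs_of_pos ht0]
    have hψ1 : ψ z₁ = 2*(φ:ℝ)*Complex.I := by
      rw [hz1d, htd]
      exact psi_tan (by linarith) hφ3
    have hψ2 : ψ z₂ = -(2*(φ:ℝ))*Complex.I := by
      have h := psi_tan (φ := -φ) (by linarith) (by linarith)
      have e : -(Real.tan (-φ) : ℂ) * Complex.I = z₂ := by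
        rw [Real.tan_neg, hz2d, htd, Complex.ofReal_neg]; ring
      rw [e] at h
      rw [h, Complex.ofReal_neg]
      ring
    have h2φ : (s:ℝ) * (2*φ) = Real.pi := by
      rw [hφd]
      field_simp
    have hsψ1 : (s:ℂ) * ψ z₁ = (Real.pi:ℝ) * Complex.I := by
      rw [hψ1, show (s:ℂ)*(2*(φ:ℂ)*Complex.I) = ((s*(2*φ):ℝ):ℂ)*Complex.I by push_cast; ring,
        h2φ]
    have hsψ2 : (s:ℂ) * ψ z₂ = -((Real.pi:ℝ) * Complex.I) := by
      rw [hψ2, show (s:ℂ)*(-(2*(φ:ℂ))*Complex.I) = -(((s*(2*φ):ℝ):ℂ)*Complex.I) by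
        push_cast; ring, h2φ]
    refine ⟨fun z => ff1 s z + ff2 s z, fun z hz => (hf1an z hz).add (hf2an z hz), ?_, ?_,
      z₁, hz1B, z₂, hz2B, ?_, ?_, ?_, ?_⟩
    · -- ODE
      intro z hz
      have hd : ∀ w ∈ ball (0:ℂ) 1, deriv (fun x => ff1 s x + ff2 s x) w
          = deriv (ff1 s) w + deriv (ff2 s) w := fun w hw =>
        deriv_add (hf1an w hw).differentiableAt (hf2an w hw).differentiableAt
      have hdd : deriv (deriv (fun x => ff1 s x + ff2 s x)) z
          = deriv (fun w => deriv (ff1 s) w + deriv (ff2 s) w) z := by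
        apply Filter.EventuallyEq.deriv_eq
        filter_upwards [isOpen_ball.mem_nhds hz] with w hw
        exact hd w hw
      rw [hdd, deriv_fun_add ((hf1an.deriv) z hz).differentiableAt
        ((hf2an.deriv) z hz).differentiableAt]
      linear_combination hf1sol z hz + hf2sol z hz
    · -- nontrivial
      intro hall
      have h1 : ff1 s 0 + ff2 s 0 = 0 := hall 0 ball0
      rw [ff1_zero, ff2_zero] at h1
      norm_num at h1
    · -- z₁ ≠ z₂
      intro h
      have h2 : (-(t:ℂ)*Complex.I).im = ((t:ℂ)*Complex.I).im := by
        rw [← hz1d, ← hz2d, h]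
      simp [Complex.mul_im] at h2
      linarith
    · -- f z₁ = 0
      show ff1 s z₁ + ff2 s z₁ = 0
      rw [ff1_eq s hz1B, hsψ1, Complex.exp_pi_mul_I]
      ring
    · -- f z₂ = 0
      show ff1 s z₂ + ff2 s z₂ = 0
      rw [ff1_eq s hz2B, hsψ2]
      rw [Complex.exp_neg, Complex.exp_pi_mul_I]
      norm_num
    · -- exhaustive
      intro z hz h0
      replace h0 : ff1 s z + ff2 s z = 0 := h0
      have hexp : Complex.exp ((s:ℂ) * ψ z) = -1 := by
        rw [ff1_eq s hz] at h0
        have h2 := ff2_ne s hz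
        have h3 : (Complex.exp ((s:ℂ)*ψ z)) * ff2 s z = (-1) * ff2 s z := by
          linear_combination h0
        have h4 := mul_right_cancel₀ h2 h3
        linear_combination h4
      obtain ⟨n, hn1, hn2⟩ := psi_eq_of_exp hs1 hs2 (by norm_num : (-1:ℂ) ≠ 0) hz hexp
      rw [Complex.arg_neg_one] at hn1
      have hncase : n = 0 ∨ n = -1 := by
        rcases int_cases (by linarith : -Real.pi < Real.pi) le_rfl hn1 with h | h | h
        · right; exact h
        · left; exact h
        · exfalso
          rw [h] at hn1
          push_cast at hn1
          rw [abs_lt] at hn1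
          linarith
      rw [Complex.log_neg_one] at hn2
      have hquot : ∀ w : ℂ, w ∈ ball (0:ℂ) 1 → ψ z = ψ w → z = w := by
        intro w hw hpsi
        apply quot_inj (ne_zero_of_ball hz).2 (ne_zero_of_ball hw).2
        rw [← exp_psi hz, ← exp_psi hw, hpsi]
      have hsne : (s:ℂ) ≠ 0 := by
        simp only [ne_eq, Complex.ofReal_eq_zero]; linarith
      have hc2φ : (s:ℂ) * (2*(φ:ℂ)) = (Real.pi:ℂ) := by
        have := congrArg (fun x : ℝ => (x:ℂ)) h2φ
        push_cast at this
        linear_combination this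
      rcases hncase with h | h
      · left
        apply hquot z₁ hz1B
        rw [hn2, h, hψ1, div_eq_iff hsne]
        push_cast
        linear_combination (-Complex.I) * hc2φ
      · right
        apply hquot z₂ hz2B
        rw [hn2, h, hψ2, div_eq_iff hsne]
        push_cast
        linear_combination Complex.I * hc2φ
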